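/- arXiv:2002.11721 — 2 statements merged into one kernel-verified Lean document; each statement's English description precedes it below -/
import Mathlib

section
/- If a graph G is a subgraph of H ⊠ P ⊠ K_ℓ for some graph H of treewidth at most k and some path P, then G is a subgraph of H' ⊠ P for some graph H' of treewidth at most (k+1)ℓ − 1. -/
open SimpleGraph Set

/-- A layering of a graph: an ordered partition `(L 0, L 1, …)` of the vertex set
such that every edge joins vertices in the same or consecutive layers. -/
def IsLayering {α : Type} (G : SimpleGraph α) (L : ℕ → Set α) : Prop :=
  (∀ v, ∃! i, v ∈ L i) ∧
  ∀ ⦃v w : α⦄, G.Adj v w → ∀ ⦃i j : ℕ⦄, v ∈ L i → w ∈ L j → i ≤ j + 1 ∧ j ≤ i + 1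

/-- A tree-decomposition of `G` with tree `tG` and bags `B`. -/
def IsTreeDecomp {α T : Type} (G : SimpleGraph α) (tG : SimpleGraph T) (B : T → Set α) : Prop :=
  tG.IsTree ∧
  (∀ v : α, (tG.induce {x | v ∈ B x}).Connected) ∧
  (∀ ⦃v w : α⦄, G.Adj v w → ∃ x, v ∈ B x ∧ w ∈ B x)

/-- `G` has treewidth (strictly) less than `k`: a tree-decomposition with bags of size at most `k`. -/
def TreewidthLT {α : Type} (G : SimpleGraph α) (k : ℕ) : Prop :=
  ∃ (T : Type) (tG : SimpleGraph T) (B : T → Set α),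
    IsTreeDecomp G tG B ∧ ∀ x, (B x).encard ≤ k

/-- `G` has treewidth at most `t`. -/
def TreewidthAtMost {α : Type} (G : SimpleGraph α) (t : ℕ) : Prop :=
  TreewidthLT G (t + 1)

/-- Maximum degree at most `Δ`. -/
def MaxDegreeLE {α : Type} (G : SimpleGraph α) (Δ : ℕ) : Prop :=
  ∀ v, (G.neighborSet v).encard ≤ Δ

/-- A colouring `f` has clustering at most `s`: every monochromatic component
(the set of vertices joined to `v` by a monochromatic walk) has at most `s` vertices. -/
def HasClustering {α β : Type} (G : SimpleGraph α) (f : α → β) (s : ℕ) : Prop :=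
  ∀ v : α, {w | ∃ p : G.Walk v w, ∀ u ∈ p.support, f u = f v}.encard ≤ s

/-- Quotient graph of a graph by an indexed partition. -/
def QuotGraph {α ι : Type} (G : SimpleGraph α) (P : ι → Set α) : SimpleGraph ι where
  Adj x y := x ≠ y ∧ ∃ v w, v ∈ P x ∧ w ∈ P y ∧ G.Adj v w
  symm := by refine ⟨?_⟩; rintro x y ⟨h, v, w, hv, hw, hvw⟩; exact ⟨h.symm, w, v, hw, hv, hvw.symm⟩
  loopless := by refine ⟨?_⟩; rintro x ⟨h, _⟩; exact h rfl

/-- The strong product of two graphs. -/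
def StrongProd {α β : Type} (A : SimpleGraph α) (B : SimpleGraph β) : SimpleGraph (α × β) where
  Adj x y := x ≠ y ∧ (x.1 = y.1 ∨ A.Adj x.1 y.1) ∧ (x.2 = y.2 ∨ B.Adj x.2 y.2)
  symm := by
    refine ⟨?_⟩
    rintro x y ⟨h, h1, h2⟩
    exact ⟨h.symm, h1.imp Eq.symm Adj.symm, h2.imp Eq.symm Adj.symm⟩
  loopless := by refine ⟨?_⟩; rintro x ⟨h, _⟩; exact h rfl

/-- The one-way infinite path on `ℕ`. -/
def NatPath : SimpleGraph ℕ where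
  Adj i j := j = i + 1 ∨ i = j + 1
  symm := by refine ⟨?_⟩; rintro i j (h | h); exacts [Or.inr h, Or.inl h]
  loopless := by refine ⟨?_⟩; rintro i (h | h) <;> omega

/-- The `p`-th power of a graph: join vertices at distance between 1 and `p`. -/
def PowerGraph {α : Type} (G : SimpleGraph α) (p : ℕ) : SimpleGraph α where
  Adj v w := v ≠ w ∧ ∃ q : G.Walk v w, q.length ≤ p
  symm := by refine ⟨?_⟩; rintro v w ⟨h, q, hq⟩; exact ⟨h.symm, q.reverse, by simpa using hq⟩
  loopless := by refine ⟨?_⟩; rintro v ⟨h, _⟩; exact h rfl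

/-- `G` has layered treewidth at most `k`. -/
def LayeredTreewidthLE {α : Type} (G : SimpleGraph α) (k : ℕ) : Prop :=
  ∃ (T : Type) (tG : SimpleGraph T) (B : T → Set α) (L : ℕ → Set α),
    IsTreeDecomp G tG B ∧ IsLayering G L ∧ ∀ x i, (B x ∩ L i).encard ≤ k

/-- An `H`-partition of `G`: parts indexed by vertices of `H` such that every edge of `G`
lies within a part or between parts adjacent in `H`. -/
def IsGraphPartition {α ι : Type} (G : SimpleGraph α) (H : SimpleGraph ι) (A : ι → Set α) : Prop :=
  (∀ v, ∃! x, v ∈ A x) ∧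
  ∀ ⦃v w : α⦄, G.Adj v w → ∀ ⦃x y : ι⦄, v ∈ A x → w ∈ A y → x = y ∨ H.Adj x y

/-- A `(k,ℓ)`-partition: a partition into nonempty parts whose quotient has treewidth at
most `k`, having layered width at most `ℓ` with respect to some layering. -/
def HasKLPartition {α : Type} (G : SimpleGraph α) (k ℓ : ℕ) : Prop :=
  ∃ (ι : Type) (P : ι → Set α),
    (∀ v, ∃! x, v ∈ P x) ∧ (∀ x, (P x).Nonempty) ∧
    TreewidthAtMost (QuotGraph G P) k ∧
    ∃ L, IsLayering G L ∧ ∀ x i, (P x ∩ L i).encard ≤ ℓ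

lemma encard_prod_le_aux {α β : Type} (s : Set α) (t : Finset β) :
    (s ×ˢ (t : Set β)).encard ≤ s.encard * t.card := by
  classical
  induction t using Finset.induction with
  | empty => simp
  | insert a t ha ih =>
    have hsplit : s ×ˢ ((insert a t : Finset β) : Set β) =
        ((fun x => (x, a)) '' s) ∪ s ×ˢ (t : Set β) := by
      rw [Finset.coe_insert, Set.insert_eq, Set.prod_union, Set.prod_singleton]
    rw [hsplit]
    calc _ ≤ ((fun x => (x, a)) '' s).encard + (s ×ˢ (t : Set β)).encard :=
          Set.encard_union_le _ _
      _ ≤ s.encard + s.encard * t.card :=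
          add_le_add (Set.encard_image_le _ _) ih
      _ = s.encard * (insert a t).card := by
          rw [Finset.card_insert_of_notMem ha]; push_cast
          rw [mul_add, mul_one, add_comm]

/-- If `G ⊆ H ⊠ P ⊠ K_ℓ` with `H` of treewidth at most `k` and `P` a path, then
`G ⊆ H' ⊠ P` for some graph `H'` of treewidth at most `(k+1)ℓ − 1`. -/
theorem stmt6 {α ι : Type} (G : SimpleGraph α) (H : SimpleGraph ι) (k ℓ : ℕ)
    (hH : TreewidthAtMost H k)
    (φ : α → ι × ℕ × Fin ℓ) (hinj : Function.Injective φ)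
    (hadj : ∀ ⦃v w⦄, G.Adj v w →
      (StrongProd H (StrongProd NatPath (completeGraph (Fin ℓ)))).Adj (φ v) (φ w)) :
    ∃ (κ : Type) (H' : SimpleGraph κ), TreewidthAtMost H' ((k + 1) * ℓ - 1) ∧
      ∃ ψ : α → κ × ℕ, Function.Injective ψ ∧
        ∀ ⦃v w⦄, G.Adj v w → (StrongProd H' NatPath).Adj (ψ v) (ψ w) := by
  obtain ⟨T, tG, B, ⟨htree, hconn, hedge⟩, hsize⟩ := hH
  refine ⟨ι × Fin ℓ, StrongProd H (completeGraph (Fin ℓ)), ?_, ?_⟩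
  · refine ⟨T, tG, fun t => (B t) ×ˢ (Set.univ : Set (Fin ℓ)), ⟨htree, ?_, ?_⟩, ?_⟩
    · intro p
      have : {x | p ∈ B x ×ˢ (Set.univ : Set (Fin ℓ))} = {x | p.1 ∈ B x} := by
        ext x; simp [Set.mem_prod]
      rw [this]
      exact hconn p.1
    · rintro p q ⟨hne, h1, h2⟩
      rcases h1 with h1 | h1
      · have hp1 : p.1 ∈ B (hconn p.1).nonempty.some := (hconn p.1).nonempty.some.2
        refine ⟨((hconn p.1).nonempty.some : T), ⟨hp1, trivial⟩, ⟨?_, trivial⟩⟩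
        rw [← h1]; exact hp1
      · obtain ⟨x, hx1, hx2⟩ := hedge h1
        exact ⟨x, ⟨hx1, trivial⟩, ⟨hx2, trivial⟩⟩
    · intro x
      have hle : ((B x) ×ˢ (Set.univ : Set (Fin ℓ))).encard ≤ (B x).encard * ℓ := by
        have := encard_prod_le_aux (B x) (Finset.univ : Finset (Fin ℓ))
        simpa using this
      rcases Nat.eq_zero_or_pos ℓ with h0 | hpos
      · subst h0
        exact hle.trans (by simp)
      · have : ((k + 1) * ℓ - 1 + 1 : ℕ) = (k + 1) * ℓ := by
          have : 1 ≤ (k + 1) * ℓ := Nat.one_le_iff_ne_zero.mpr (by positivity)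
          omega
        rw [this]
        refine hle.trans ?_
        calc (B x).encard * (ℓ : ℕ∞) ≤ (k + 1 : ℕ) * (ℓ : ℕ∞) :=
              mul_le_mul_left (hsize x) _
          _ = ((k + 1) * ℓ : ℕ) := by push_cast; ring
  · refine ⟨fun v => (((φ v).1, (φ v).2.2), (φ v).2.1), ?_, ?_⟩
    · intro v w h
      apply hinj
      have h1 : (φ v).1 = (φ w).1 := congrArg (fun p => p.1.1) h
      have h2 : (φ v).2.2 = (φ w).2.2 := congrArg (fun p => p.1.2) h
      have h3 : (φ v).2.1 = (φ w).2.1 := congrArg (fun p => p.2) h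
      exact Prod.ext h1 (Prod.ext h3 h2)
    · intro v w hvw
      obtain ⟨hne, h1, h23⟩ := hadj hvw
      have h2 : (φ v).2.1 = (φ w).2.1 ∨ NatPath.Adj (φ v).2.1 (φ w).2.1 := by
        rcases h23 with h | ⟨_, hn, _⟩
        · exact Or.inl (congrArg Prod.fst h)
        · exact hn
      have h3 : (φ v).2.2 = (φ w).2.2 ∨ (completeGraph (Fin ℓ)).Adj (φ v).2.2 (φ w).2.2 := by
        rcases h23 with h | ⟨_, _, hk⟩
        · exact Or.inl (congrArg Prod.snd h)
        · exact hk
      refine ⟨?_, ?_, h2⟩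
      · intro h
        apply hne
        have h1 : (φ v).1 = (φ w).1 := congrArg (fun p => p.1.1) h
        have h2' : (φ v).2.2 = (φ w).2.2 := congrArg (fun p => p.1.2) h
        have h3' : (φ v).2.1 = (φ w).2.1 := congrArg (fun p => p.2) h
        exact Prod.ext h1 (Prod.ext h3' h2')
      · by_cases heq : ((φ v).1, (φ v).2.2) = ((φ w).1, (φ w).2.2)
        · exact Or.inl heq
        · refine Or.inr ⟨heq, h1, ?_⟩
          rcases h3 with h3 | h3
          · by_cases hc : (φ v).2.2 = (φ w).2.2
            · exact Or.inl hc
            · exact Or.inr hc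
          · exact Or.inr h3
end

section
/- If a graph G has a (k,ℓ)-partition, then G has layered treewidth at most (k+1)ℓ. -/
open SimpleGraph Set

lemma encard_biUnion_le_mul {ι α : Type} {s : Set ι} (f : ι → Set α) (hs : s.Finite)
    {m : ℕ∞} (hf : ∀ p ∈ s, (f p).encard ≤ m) :
    (⋃ p ∈ s, f p).encard ≤ s.encard * m := by
  revert hf
  refine Set.Finite.induction_on _ hs (by simp) ?_
  intro a s ha hsf ih hf
  rw [Set.biUnion_insert, Set.encard_insert_of_notMem ha]
  calc (f a ∪ ⋃ p ∈ s, f p).encard ≤ (f a).encard + (⋃ p ∈ s, f p).encard :=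
        Set.encard_union_le _ _
    _ ≤ m + s.encard * m := add_le_add (hf a (mem_insert _ _))
        (ih fun p hp => hf p (mem_insert_of_mem _ hp))
    _ = (s.encard + 1) * m := by rw [add_mul, one_mul, add_comm]

/-- If a graph has a `(k,ℓ)`-partition, then it has layered treewidth at most
`(k+1)ℓ`. -/
theorem stmt7 {α : Type} (G : SimpleGraph α) (k ℓ : ℕ) (h : HasKLPartition G k ℓ) :
    LayeredTreewidthLE G ((k + 1) * ℓ) := by
  obtain ⟨ι, P, huniq, hne, ⟨T, tG, B, ⟨htree, hconn, hedge⟩, hbag⟩, L, hL, hPL⟩ := h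
  refine ⟨T, tG, fun t => ⋃ p ∈ B t, P p, L, ⟨htree, ?_, ?_⟩, hL, ?_⟩
  · intro v
    obtain ⟨x0, hx0, hx0u⟩ := huniq v
    have hset : {t | v ∈ ⋃ p ∈ B t, P p} = {t | x0 ∈ B t} := by
      ext t
      simp only [mem_setOf_eq, mem_iUnion, exists_prop]
      constructor
      · rintro ⟨p, hp, hvp⟩; rwa [hx0u p hvp] at hp
      · exact fun ht => ⟨x0, ht, hx0⟩
    rw [hset]
    exact hconn x0
  · intro v w hvw
    obtain ⟨x, hx, -⟩ := huniq v
    obtain ⟨y, hy, -⟩ := huniq w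
    by_cases hxy : x = y
    · subst hxy
      obtain ⟨⟨t, ht⟩⟩ := (hconn x).nonempty
      exact ⟨t, mem_biUnion ht hx, mem_biUnion ht hy⟩
    · obtain ⟨t, hxt, hyt⟩ := hedge ⟨hxy, v, w, hx, hy, hvw⟩
      exact ⟨t, mem_biUnion hxt hx, mem_biUnion hyt hy⟩
  · intro t i
    have hfin : (B t).Finite := Set.finite_of_encard_le_coe (hbag t)
    have h1 : ((⋃ p ∈ B t, P p) ∩ L i) = ⋃ p ∈ B t, (P p ∩ L i) := by
      rw [Set.iUnion₂_inter]
    rw [h1]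
    calc (⋃ p ∈ B t, (P p ∩ L i)).encard ≤ (B t).encard * (ℓ : ℕ∞) :=
          encard_biUnion_le_mul _ hfin fun p _ => hPL p i
      _ ≤ ((k + 1 : ℕ) : ℕ∞) * (ℓ : ℕ∞) := mul_le_mul_left (hbag t) _
      _ = (((k + 1) * ℓ : ℕ) : ℕ∞) := by push_cast; ring
end
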